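/- Let G = G_{4,3} and let F = (f1,f2,f3,f4) ∈ G* ≅ ℝ⁴. If f1 = f2 = 0 then Ω_F(G) = {F}. If f1 = 0 ≠ f2 then Ω_F(G) = { x ∈ ℝ⁴ : x1 = 0, x3 = f3, f2·x2 > 0 } (a 2-dimensional half-plane with x4 free). If f1 ≠ 0 then Ω_F(G) = { x ∈ ℝ⁴ : f1·x1 > 0 } (a 4-dimensional open half-space). -/

import Mathlib

/-! Auxiliary scalar series -/

noncomputable def gg (d : ℝ) : ℝ := ∑' n : ℕ, d ^ n / ((n + 1).factorial : ℝ)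
noncomputable def hh (d : ℝ) : ℝ := ∑' n : ℕ, (n : ℝ) * d ^ (n - 1) / ((n + 1).factorial : ℝ)

lemma gg_summable (d : ℝ) : Summable (fun n : ℕ => d ^ n / ((n + 1).factorial : ℝ)) := by
  refine Summable.of_abs ?_
  refine Summable.of_nonneg_of_le (fun n => abs_nonneg _) (fun n => ?_)
    (Real.summable_pow_div_factorial |d|)
  rw [abs_div, abs_pow, Nat.abs_cast]
  exact div_le_div_of_nonneg_left (by positivity) (by positivity)
    (by exact_mod_cast Nat.factorial_le (Nat.le_succ n))

lemma hh_summable (d : ℝ) :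
    Summable (fun n : ℕ => (n : ℝ) * d ^ (n - 1) / ((n + 1).factorial : ℝ)) := by
  rw [← summable_nat_add_iff 1]
  refine Summable.of_abs ?_
  refine Summable.of_nonneg_of_le (fun n => abs_nonneg _) (fun n => ?_)
    (Real.summable_pow_div_factorial |d|)
  have h1 : ((n:ℝ) + 1) * n.factorial ≤ ((n + 1 + 1).factorial : ℝ) := by
    exact_mod_cast le_trans (le_of_eq (Nat.factorial_succ n).symm)
      (Nat.factorial_le (Nat.le_succ (n+1)))
  have h2 : (0:ℝ) < ((n + 1 + 1).factorial : ℝ) := by positivity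
  have h3 : (0:ℝ) < (n.factorial : ℝ) := by positivity
  rw [abs_div, abs_mul, abs_pow, Nat.abs_cast, Nat.abs_cast]
  simp only [Nat.add_sub_cancel, Nat.cast_add, Nat.cast_one]
  rw [div_le_div_iff₀ h2 h3]
  calc ((n:ℝ)+1) * |d|^n * n.factorial = |d|^n * (((n:ℝ)+1) * n.factorial) := by ring
    _ ≤ |d|^n * ((n + 1 + 1).factorial : ℝ) := by
        exact mul_le_mul_of_nonneg_left h1 (by positivity)

lemma gg_hasSum (d : ℝ) : HasSum (fun n : ℕ => d ^ n / ((n + 1).factorial : ℝ)) (gg d) :=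
  (gg_summable d).hasSum

lemma hh_hasSum (d : ℝ) :
    HasSum (fun n : ℕ => (n : ℝ) * d ^ (n - 1) / ((n + 1).factorial : ℝ)) (hh d) :=
  (hh_summable d).hasSum

lemma exp_hasSum (d : ℝ) : HasSum (fun n : ℕ => d ^ n / (n.factorial : ℝ)) (Real.exp d) := by
  rw [Real.exp_eq_exp_ℝ]
  exact NormedSpace.expSeries_div_hasSum_exp d

lemma exp_shift_hasSum (d : ℝ) :
    HasSum (fun n : ℕ => d ^ (n+1) / ((n+1).factorial : ℝ)) (Real.exp d - 1) := by
  refine (hasSum_nat_add_iff (f := fun n : ℕ => d ^ n / (n.factorial : ℝ)) 1).mpr ?_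
  simpa using exp_hasSum d

lemma gg_mul (d : ℝ) : d * gg d = Real.exp d - 1 := by
  have h1 : HasSum (fun n : ℕ => d * (d ^ n / ((n + 1).factorial : ℝ))) (d * gg d) :=
    (gg_hasSum d).mul_left d
  have h2 := exp_shift_hasSum d
  have heq : (fun n : ℕ => d * (d ^ n / ((n + 1).factorial : ℝ)))
      = (fun n : ℕ => d ^ (n+1) / (((n+1)).factorial : ℝ)) := by
    funext n; rw [pow_succ]; ring
  rw [heq] at h1
  exact h1.unique h2

lemma gg_pos (d : ℝ) : 0 < gg d := by
  rcases lt_trichotomy d 0 with h | h | h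
  · have h1 := gg_mul d
    have hx : Real.exp d - 1 < 0 := by
      have := Real.exp_lt_one_iff.mpr h; linarith
    nlinarith
  · subst h
    have h0 : gg 0 = 1 := by
      rw [gg, tsum_eq_single 0]
      · simp
      · intro n hn
        simp [zero_pow hn]
    rw [h0]; norm_num
  · have h1 := gg_mul d
    have hx : 0 < Real.exp d - 1 := by
      have := Real.add_one_le_exp d; linarith
    nlinarith

/-! Matrices -/

def Mmat (a β c d : ℝ) : Matrix (Fin 4) (Fin 4) ℝ :=
  !![d, c, -β, -a; 0, d, 0, -β; 0, 0, 0, 0; 0, 0, 0, 0]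

noncomputable def Pmat (a β c d : ℝ) (n : ℕ) : Matrix (Fin 4) (Fin 4) ℝ :=
  !![d^(n+1), (n+1)*c*d^n, -β*d^n, -(a*d^n + n*c*β*d^(n-1));
     0, d^(n+1), 0, -β*d^n;
     0, 0, 0, 0; 0, 0, 0, 0]

lemma Mmat_pow (a β c d : ℝ) (n : ℕ) : Mmat a β c d ^ (n+1) = Pmat a β c d n := by
  induction n with
  | zero => ext i j; fin_cases i <;> fin_cases j <;> simp [Mmat, Pmat]
  | succ n ih =>
    rw [pow_succ, ih]
    ext i j
    fin_cases i <;> fin_cases j <;>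
      simp [Mmat, Pmat, Matrix.mul_apply, Fin.sum_univ_succ, Matrix.vecHead, Matrix.vecTail] <;>
      push_cast <;> ring

noncomputable def Emat (a β c d : ℝ) : Matrix (Fin 4) (Fin 4) ℝ :=
  !![Real.exp d, c * Real.exp d, -β * gg d, -(a * gg d + c * β * hh d);
     0, Real.exp d, 0, -β * gg d;
     0, 0, 1, 0; 0, 0, 0, 1]

lemma exp_Mmat (a β c d : ℝ) :
    NormedSpace.exp (Mmat a β c d) = Emat a β c d := by
  have key : HasSum (fun n : ℕ => ((n.factorial : ℝ))⁻¹ • Mmat a β c d ^ n) (Emat a β c d) := by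
    have hshift : HasSum (fun n : ℕ => (((n+1).factorial : ℝ))⁻¹ • Mmat a β c d ^ (n+1))
        (Emat a β c d - 1) := by
      have heq : ∀ n : ℕ, (((n+1).factorial : ℝ))⁻¹ • Mmat a β c d ^ (n+1)
          = (((n+1).factorial : ℝ))⁻¹ • Pmat a β c d n := by
        intro n; rw [Mmat_pow]
      simp only [heq]
      apply Pi.hasSum.mpr
      intro i
      apply Pi.hasSum.mpr
      intro j
      fin_cases i <;> fin_cases j <;>
        simp [Pmat, Emat, Matrix.one_apply, Matrix.smul_apply, Matrix.sub_apply, smul_eq_mul,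
          Matrix.vecHead, Matrix.vecTail]
      · convert exp_shift_hasSum d using 1
        funext i; ring
      · convert (exp_hasSum d).mul_left c using 1
        rfl
        funext i
        rw [Nat.factorial_succ]
        have h1 : ((i:ℝ)+1) ≠ 0 := by positivity
        have h2 : (i.factorial:ℝ) ≠ 0 := by positivity
        push_cast
        field_simp
      · convert ((gg_hasSum d).mul_left β).neg using 1
        rfl
        funext i; ring
      · convert (((hh_hasSum d).mul_left (c*β)).add ((gg_hasSum d).mul_left a)).neg using 1
        rfl
        · funext i; ring
        · ring
      · convert exp_shift_hasSum d using 1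
        funext i; ring
      · convert ((gg_hasSum d).mul_left β).neg using 1
        rfl
        funext i; ring
      all_goals exact hasSum_zero
    have h2 := (hasSum_nat_add_iff
      (f := fun n : ℕ => ((n.factorial : ℝ))⁻¹ • Mmat a β c d ^ n) 1).mp hshift
    simpa using h2
  rw [NormedSpace.exp_eq_tsum ℝ]
  exact key.tsum_eq

lemma ad_toMatrix (L : Type) [LieRing L] [LieAlgebra ℝ L] (b : Module.Basis (Fin 4) ℝ L)
    (h32 : ⁅b 2, b 1⁆ = b 0) (h41 : ⁅b 3, b 0⁆ = b 0) (h42 : ⁅b 3, b 1⁆ = b 1)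
    (h12 : ⁅b 0, b 1⁆ = 0) (h31 : ⁅b 2, b 0⁆ = 0) (h34 : ⁅b 2, b 3⁆ = 0)
    (a β c d : ℝ) :
    LinearMap.toMatrix b b (LieAlgebra.ad ℝ L (a • b 0 + β • b 1 + c • b 2 + d • b 3))
      = Mmat a β c d := by
  have h21 : ⁅b 1, b 0⁆ = 0 := by rw [← lie_skew, h12]; simp
  have h13 : ⁅b 0, b 2⁆ = 0 := by rw [← lie_skew, h31]; simp
  have h23 : ⁅b 1, b 2⁆ = -b 0 := by rw [← lie_skew, h32]
  have h14 : ⁅b 0, b 3⁆ = -b 0 := by rw [← lie_skew, h41]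
  have h24 : ⁅b 1, b 3⁆ = -b 1 := by rw [← lie_skew, h42]
  have h43 : ⁅b 3, b 2⁆ = 0 := by rw [← lie_skew, h34]; simp
  ext i j
  rw [LinearMap.toMatrix_apply, LieAlgebra.ad_apply]
  fin_cases i <;> fin_cases j <;>
    simp [add_lie, smul_lie, lie_self, h32, h41, h42, h12, h31, h34, h21, h13, h23, h14, h24, h43,
      Mmat, Module.Basis.repr_self, Finsupp.single_apply, smul_neg, Matrix.vecHead, Matrix.vecTail]

noncomputable def Yvec (f : Fin 4 → ℝ) (a β c d : ℝ) : Fin 4 → ℝ :=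
  ![f 0 * Real.exp d,
    f 0 * (c * Real.exp d) + f 1 * Real.exp d,
    f 0 * (-β * gg d) + f 2,
    f 0 * (-(a * gg d + c * β * hh d)) + f 1 * (-β * gg d) + f 3]

lemma vecMul_Emat (f : Fin 4 → ℝ) (a β c d : ℝ) :
    Matrix.vecMul f (Emat a β c d) = Yvec f a β c d := by
  funext j
  fin_cases j <;>
    simp [Matrix.vecMul, dotProduct, Fin.sum_univ_four, Emat, Yvec,
      Matrix.vecHead, Matrix.vecTail] <;>
    ring

/-- coadjoint orbit picture for `G_{4,3}` (`[X3,X2]=X1`, `[X4,X1]=X1`,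
`[X4,X2]=X2`). `Ω_F(G) = {F ∘ exp(ad_X) : X ∈ G}` in the coordinates of the dual basis. -/
theorem stmt_13 (L : Type) [LieRing L] [LieAlgebra ℝ L] (b : Module.Basis (Fin 4) ℝ L)
    (h32 : ⁅b 2, b 1⁆ = b 0) (h41 : ⁅b 3, b 0⁆ = b 0) (h42 : ⁅b 3, b 1⁆ = b 1)
    (h12 : ⁅b 0, b 1⁆ = 0) (h31 : ⁅b 2, b 0⁆ = 0) (h34 : ⁅b 2, b 3⁆ = 0)
    (f : Fin 4 → ℝ) (Ω : Set (Fin 4 → ℝ))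
    (hΩ : Ω = { y | ∃ X : L,
      y = Matrix.vecMul f (NormedSpace.exp ((LinearMap.toMatrix b b) (LieAlgebra.ad ℝ L X))) }) :
    (f 0 = 0 ∧ f 1 = 0 → Ω = {f}) ∧
    (f 0 = 0 ∧ f 1 ≠ 0 → Ω = { x | x 0 = 0 ∧ x 2 = f 2 ∧ f 1 * x 1 > 0 }) ∧
    (f 0 ≠ 0 → Ω = { x | f 0 * x 0 > 0 }) := by
  have horb : Ω = {y | ∃ a β c d : ℝ, y = Yvec f a β c d} := by
    rw [hΩ]
    ext y
    simp only [Set.mem_setOf_eq]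
    constructor
    · rintro ⟨X, rfl⟩
      refine ⟨b.repr X 0, b.repr X 1, b.repr X 2, b.repr X 3, ?_⟩
      have hX : X = b.repr X 0 • b 0 + b.repr X 1 • b 1 + b.repr X 2 • b 2 + b.repr X 3 • b 3 := by
        have h := b.sum_repr X
        rw [Fin.sum_univ_four] at h
        exact h.symm
      conv_lhs => rw [hX]
      rw [ad_toMatrix L b h32 h41 h42 h12 h31 h34, exp_Mmat, vecMul_Emat]
    · rintro ⟨a, β, c, d, rfl⟩
      exact ⟨a • b 0 + β • b 1 + c • b 2 + d • b 3, by
        rw [ad_toMatrix L b h32 h41 h42 h12 h31 h34, exp_Mmat, vecMul_Emat]⟩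
  refine ⟨?_, ?_, ?_⟩
  · rintro ⟨hf0, hf1⟩
    rw [horb]
    ext y
    simp only [Set.mem_setOf_eq, Set.mem_singleton_iff]
    constructor
    · rintro ⟨a, β, c, d, rfl⟩
      funext j
      fin_cases j <;> simp [Yvec, hf0, hf1]
    · rintro rfl
      exact ⟨0, 0, 0, 0, by
        funext j
        fin_cases j <;> simp [Yvec, hf0, hf1]⟩
  · rintro ⟨hf0, hf1⟩
    rw [horb]
    ext x
    simp only [Set.mem_setOf_eq]
    constructor
    · rintro ⟨a, β, c, d, rfl⟩
      refine ⟨by simp [Yvec, hf0], by simp [Yvec, hf0], ?_⟩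
      simp only [Yvec, hf0]
      simp
      nlinarith [Real.exp_pos d, mul_self_pos.mpr hf1]
    · rintro ⟨hx0, hx2, hx1⟩
      have hpos : 0 < x 1 / f 1 := by
        rw [show x 1 / f 1 = (f 1 * x 1) / (f 1)^2 by field_simp]
        positivity
      set d := Real.log (x 1 / f 1) with hd
      have hexp : Real.exp d = x 1 / f 1 := Real.exp_log hpos
      have hgne : gg d ≠ 0 := (gg_pos d).ne'
      refine ⟨0, (f 3 - x 3)/(f 1 * gg d), 0, d, ?_⟩
      funext j
      fin_cases j
      · simpa [Yvec, hf0] using hx0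
      · simp [Yvec, hf0, hexp]
        field_simp
      · simpa [Yvec, hf0] using hx2
      · simp [Yvec, hf0]
        field_simp
        ring
  · intro hf0
    rw [horb]
    ext x
    simp only [Set.mem_setOf_eq]
    constructor
    · rintro ⟨a, β, c, d, rfl⟩
      simp only [Yvec]
      simp
      nlinarith [Real.exp_pos d, mul_self_pos.mpr hf0]
    · intro hx
      have hpos : 0 < x 0 / f 0 := by
        rw [show x 0 / f 0 = (f 0 * x 0) / (f 0)^2 by field_simp]
        positivity
      set d := Real.log (x 0 / f 0) with hd
      have hexp : Real.exp d = x 0 / f 0 := Real.exp_log hpos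
      have hEne : Real.exp d ≠ 0 := (Real.exp_pos d).ne'
      have hgne : gg d ≠ 0 := (gg_pos d).ne'
      set c := (x 1 / Real.exp d - f 1) / f 0 with hc
      set β := (f 2 - x 2) / (f 0 * gg d) with hβ
      set a := ((f 3 - x 3 - f 1 * β * gg d) / f 0 - c * β * hh d) / gg d with ha
      have hx0ne : x 0 ≠ 0 := right_ne_zero_of_mul (ne_of_gt hx)
      refine ⟨a, β, c, d, ?_⟩
      funext j
      fin_cases j
      · simp [Yvec, hexp]
        field_simp
      · simp [Yvec, hc, hexp]
        field_simp [hx0ne]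
        ring
      · simp [Yvec, hβ]
        field_simp
        ring
      · simp [Yvec, ha, hβ, hc]
        field_simp
        ring
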